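/- If s₁ and s₂ are independent uniformly random bitstrings of length m, then Pr[ED(s₁, s₂) ≤ D] ≤ (4e·m/D + 5e + 4e/D)^D / 2^m. -/

import Mathlib

set_option maxHeartbeats 1000000
open Real Finset

open Real Finset

/-! Levenshtein distance, as defined in Mathlib's former `Mathlib/Data/List/EditDistance/Defs.lean`
(removed since); reproduced here with its old meaning. -/

namespace Levenshtein

/-- A cost structure for Levenshtein edit distance. -/
structure Cost (α β δ : Type*) where
  /-- Cost to delete an element from a list. -/
  delete : α → δ
  /-- Cost in insert an element into a list. -/
  insert : β → δ
  /-- Cost to substitute one element for another in a list. -/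
  substitute : α → β → δ

/-- The default cost structure, for which all operations cost `1`. -/
def defaultCost {α : Type*} [DecidableEq α] : Cost α α ℕ where
  delete _ := 1
  insert _ := 1
  substitute a b := if a = b then 0 else 1

/-- (Implementation detail for `levenshtein`.) -/
def impl {α β δ : Type*} [AddZeroClass δ] [Min δ] (C : Cost α β δ)
    (xs : List α) (y : β) (d : {r : List δ // 0 < r.length}) : {r : List δ // 0 < r.length} :=
  let ⟨ds, w⟩ := d
  xs.zip (ds.zip ds.tail) |>.foldr
    (init := ⟨[C.insert y + ds.getLast (List.length_pos_iff.mp w)], by simp⟩)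
    (fun ⟨x, d₀, d₁⟩ ⟨r, w⟩ =>
      ⟨min (C.delete x + r[0]) (min (C.insert y + d₀) (C.substitute x y + d₁)) :: r, by simp⟩)

end Levenshtein

open Levenshtein

/-- `suffixLevenshtein C xs ys` computes the Levenshtein distance
(using the cost functions provided by a `C : Cost α β δ`)
from each suffix of the list `xs` to the list `ys`. -/
def suffixLevenshtein {α β δ : Type*} [AddZeroClass δ] [Min δ] (C : Cost α β δ)
    (xs : List α) (ys : List β) : {r : List δ // 0 < r.length} :=
  ys.foldr
    (impl C xs)
    (xs.foldr (init := ⟨[0], by simp⟩) (fun a ⟨r, w⟩ => ⟨(C.delete a + r[0]) :: r, by simp⟩))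

/-- `levenshtein C xs ys` computes the Levenshtein distance
(using the cost functions provided by a `C : Cost α β δ`)
from the list `xs` to the list `ys`. -/
def levenshtein {α β δ : Type*} [AddZeroClass δ] [Min δ] (C : Cost α β δ)
    (xs : List α) (ys : List β) : δ :=
  let ⟨r, w⟩ := suffixLevenshtein C xs ys
  r[0]


namespace Levenshtein

@[simp] theorem defaultCost_delete {α : Type*} [DecidableEq α] (a : α) :
    (defaultCost : Cost α α ℕ).delete a = 1 := rfl
@[simp] theorem defaultCost_insert {α : Type*} [DecidableEq α] (a : α) :
    (defaultCost : Cost α α ℕ).insert a = 1 := rfl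
@[simp] theorem defaultCost_substitute {α : Type*} [DecidableEq α] (a b : α) :
    (defaultCost : Cost α α ℕ).substitute a b = if a = b then 0 else 1 := rfl

theorem impl_cons' {α β δ : Type*} [AddZeroClass δ] [Min δ] {C : Cost α β δ}
    {x : α} {xs : List α} {y : β} {d : δ} {ds : List δ} {w : 0 < (d :: ds).length}
    (w' : 0 < List.length ds) :
    impl C (x :: xs) y ⟨d :: ds, w⟩ =
      let ⟨r, w⟩ := impl C xs y ⟨ds, w'⟩
      ⟨min (C.delete x + r[0]) (min (C.insert y + d) (C.substitute x y + ds[0])) :: r, by simp⟩ :=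
  match ds, w' with | _ :: _, _ => rfl

theorem impl_length' {α β δ : Type*} [AddZeroClass δ] [Min δ] {C : Cost α β δ}
    (xs : List α) (y : β) (d : {r : List δ // 0 < r.length}) (w : d.1.length = xs.length + 1) :
    (impl C xs y d).1.length = xs.length + 1 := by
  induction xs generalizing d with
  | nil => rfl
  | cons x xs ih =>
    match d, w with
    | ⟨d₁ :: d₂ :: ds, _⟩, w =>
      rw [impl_cons' (by simp)]
      simp only [List.length_cons]
      congr 1
      exact ih ⟨d₂ :: ds, (by simp)⟩ (by simpa using w)

theorem suffixLevenshtein_length' {α β δ : Type*} [AddZeroClass δ] [Min δ] (C : Cost α β δ)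
    (xs : List α) (ys : List β) :
    (suffixLevenshtein C xs ys).1.length = xs.length + 1 := by
  induction ys with
  | nil =>
    dsimp [suffixLevenshtein]
    induction xs with
    | nil => rfl
    | cons _ xs ih => simp_all
  | cons y ys ih =>
    dsimp [suffixLevenshtein]
    rw [impl_length']
    exact ih

theorem suffixLevenshtein_cons₁' {α β δ : Type*} [AddZeroClass δ] [Min δ] {C : Cost α β δ}
    (x : α) (xs : List α) (ys : List β) :
    suffixLevenshtein C (x :: xs) ys =
      ⟨levenshtein C (x :: xs) ys :: (suffixLevenshtein C xs ys).1, by simp⟩ := by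
  induction ys with
  | nil => rfl
  | cons y ys ih =>
    have e : suffixLevenshtein C (x :: xs) (y :: ys) = impl C (x :: xs) y (suffixLevenshtein C (x :: xs) ys) := rfl
    have aux : ∀ {x y : {r : List δ // 0 < r.length}}
        (w₀ : x.1[0]'x.2 = y.1[0]'y.2) (w : x.1.tail = y.1.tail), x = y := by
      intro x y w₀ w
      match x, y with
      | ⟨hx :: tx, _⟩, ⟨hy :: ty, _⟩ => simp_all
    apply aux
    · rfl
    · rw [e, ih, impl_cons']
      · rfl
      · simp [suffixLevenshtein_length']

theorem levenshtein_nil_cons {α β δ : Type*} [AddZeroClass δ] [Min δ] {C : Cost α β δ}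
    (y : β) (ys : List β) :
    levenshtein C [] (y :: ys) = C.insert y + levenshtein C [] ys := by
  have h1 := suffixLevenshtein_length' C [] ys
  have h2 : suffixLevenshtein C [] (y :: ys) = impl C [] y (suffixLevenshtein C [] ys) := rfl
  have key : ∀ (d : {r : List δ // 0 < r.length}), d.1.length = ([] : List α).length + 1 →
      ∀ h, (impl C [] y d).1[0]'h = C.insert y + d.1[0]'d.2 := by
    rintro ⟨r, w⟩ h1 h
    rcases r with _ | ⟨a, _ | ⟨b, r⟩⟩
    · simp at w
    · rfl
    · simp at h1
  simp only [levenshtein, h2]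
  exact key _ h1 _

theorem levenshtein_cons_nil {α β δ : Type*} [AddZeroClass δ] [Min δ] {C : Cost α β δ}
    (x : α) (xs : List α) :
    levenshtein C (x :: xs) ([] : List β) = C.delete x + levenshtein C xs [] := rfl

theorem levenshtein_cons_cons {α β δ : Type*} [AddZeroClass δ] [Min δ] {C : Cost α β δ}
    (x : α) (xs : List α) (y : β) (ys : List β) :
    levenshtein C (x :: xs) (y :: ys) =
      min (C.delete x + levenshtein C xs (y :: ys))
        (min (C.insert y + levenshtein C (x :: xs) ys)
          (C.substitute x y + levenshtein C xs ys)) := by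
  have e : suffixLevenshtein C (x :: xs) (y :: ys) = impl C (x :: xs) y (suffixLevenshtein C (x :: xs) ys) := rfl
  have h1 := suffixLevenshtein_length' C xs ys
  have e2 : suffixLevenshtein C xs (y :: ys) = impl C xs y (suffixLevenshtein C xs ys) := rfl
  conv_lhs => simp only [levenshtein]
  rw [e, suffixLevenshtein_cons₁', impl_cons' (by omega)]
  simp only [levenshtein, e2]
  rfl

end Levenshtein


namespace RSL


inductive Op where
  | copy | del | flip | ins (b : Bool)
deriving DecidableEq

def applyS : List Op → List Bool → Option (List Bool)
  | [], [] => some []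
  | [], _ :: _ => none
  | Op.copy :: _, [] => none
  | Op.copy :: σ, a :: s => (applyS σ s).map (a :: ·)
  | Op.del :: _, [] => none
  | Op.del :: σ, _ :: s => applyS σ s
  | Op.flip :: _, [] => none
  | Op.flip :: σ, a :: s => (applyS σ s).map ((!a) :: ·)
  | Op.ins b :: σ, s => (applyS σ s).map (b :: ·)

def isDel : Op → Bool := fun o => o == Op.del
def isFlip : Op → Bool := fun o => o == Op.flip
def isInsT : Op → Bool := fun o => o == Op.ins true
def isInsF : Op → Bool := fun o => o == Op.ins false
def isIns : Op → Bool := fun o => match o with | .ins _ => true | _ => false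

def cost (σ : List Op) : ℕ := σ.countP (fun o => o != Op.copy)

lemma cost_eq (σ : List Op) :
    cost σ = σ.countP isDel + σ.countP isFlip + (σ.countP isInsT + σ.countP isInsF) := by
  induction σ with
  | nil => simp [cost]
  | cons a σ ih =>
    rcases a with _ | _ | _ | b
    · simp_all [cost, List.countP_cons, isDel, isFlip, isInsT, isInsF]
    · simp_all [cost, List.countP_cons, isDel, isFlip, isInsT, isInsF]; omega
    · simp_all [cost, List.countP_cons, isDel, isFlip, isInsT, isInsF]; omega
    · rcases b <;> simp_all [cost, List.countP_cons, isDel, isFlip, isInsT, isInsF] <;> omega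

lemma countIns_eq (σ : List Op) :
    σ.countP isIns = σ.countP isInsT + σ.countP isInsF := by
  induction σ with
  | nil => simp
  | cons a σ ih =>
    rcases a with _ | _ | _ | b
    · simp_all [List.countP_cons, isIns, isInsT, isInsF]
    · simp_all [List.countP_cons, isIns, isInsT, isInsF]
    · simp_all [List.countP_cons, isIns, isInsT, isInsF]
    · rcases b <;> simp_all [List.countP_cons, isIns, isInsT, isInsF] <;> omega

lemma applyS_length {σ : List Op} {s t : List Bool} (h : applyS σ s = some t) :
    σ.length = s.length + σ.countP isIns := by
  induction σ generalizing s t with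
  | nil =>
    cases s with
    | nil => simp
    | cons a s => simp [applyS] at h
  | cons o σ ih =>
    rcases o with _ | _ | _ | b
    · cases s with
      | nil => simp [applyS] at h
      | cons a s =>
        simp only [applyS, Option.map_eq_some_iff] at h
        obtain ⟨t', ht', rfl⟩ := h
        simp [List.countP_cons, isIns, ih ht']; omega
    · cases s with
      | nil => simp [applyS] at h
      | cons a s =>
        simp only [applyS] at h
        simp [List.countP_cons, isIns, ih h]; omega
    · cases s with
      | nil => simp [applyS] at h
      | cons a s =>
        simp only [applyS, Option.map_eq_some_iff] at h
        obtain ⟨t', ht', rfl⟩ := h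
        simp [List.countP_cons, isIns, ih ht']; omega
    · simp only [applyS, Option.map_eq_some_iff] at h
      obtain ⟨t', ht', rfl⟩ := h
      simp [List.countP_cons, isIns, ih ht']; omega

lemma applyS_out_length {σ : List Op} {s t : List Bool} (h : applyS σ s = some t) :
    t.length + σ.countP isDel = s.length + σ.countP isIns := by
  induction σ generalizing s t with
  | nil =>
    cases s with
    | nil => simp [applyS] at h; simp [← h]
    | cons a s => simp [applyS] at h
  | cons o σ ih =>
    rcases o with _ | _ | _ | b
    · cases s with
      | nil => simp [applyS] at h
      | cons a s =>
        simp only [applyS, Option.map_eq_some_iff] at h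
        obtain ⟨t', ht', rfl⟩ := h
        have := ih ht'
        simp [List.countP_cons, isIns, isDel]
        omega
    · cases s with
      | nil => simp [applyS] at h
      | cons a s =>
        have := ih h
        simp [List.countP_cons, isIns, isDel]
        omega
    · cases s with
      | nil => simp [applyS] at h
      | cons a s =>
        simp only [applyS, Option.map_eq_some_iff] at h
        obtain ⟨t', ht', rfl⟩ := h
        have := ih ht'
        simp [List.countP_cons, isIns, isDel]
        omega
    · simp only [applyS, Option.map_eq_some_iff] at h
      obtain ⟨t', ht', rfl⟩ := h
      have := ih ht'
      simp [List.countP_cons, isIns, isDel]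
      omega


@[simp] lemma cost_copy (σ : List Op) : cost (Op.copy :: σ) = cost σ := by
  simp [cost, List.countP_cons]
@[simp] lemma cost_del (σ : List Op) : cost (Op.del :: σ) = cost σ + 1 := by
  simp [cost, List.countP_cons]
@[simp] lemma cost_flip (σ : List Op) : cost (Op.flip :: σ) = cost σ + 1 := by
  simp [cost, List.countP_cons]
@[simp] lemma cost_ins (b : Bool) (σ : List Op) : cost (Op.ins b :: σ) = cost σ + 1 := by
  simp [cost, List.countP_cons]

lemma exists_script (s t : List Bool) :
    ∃ σ : List Op, applyS σ s = some t ∧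
      cost σ ≤ levenshtein Levenshtein.defaultCost s t := by
  induction s generalizing t with
  | nil =>
    induction t with
    | nil => exact ⟨[], rfl, by simp [cost]⟩
    | cons b t iht =>
      obtain ⟨σ, h1, h2⟩ := iht
      refine ⟨Op.ins b :: σ, ?_, ?_⟩
      · simp [applyS, h1]
      · rw [levenshtein_nil_cons]
        simp only [Levenshtein.defaultCost_insert, cost_ins]
        omega
  | cons a s ihs =>
    induction t with
    | nil =>
      obtain ⟨σ, h1, h2⟩ := ihs []
      refine ⟨Op.del :: σ, ?_, ?_⟩
      · simp [applyS, h1]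
      · rw [levenshtein_cons_nil]
        simp only [Levenshtein.defaultCost_delete, cost_del]
        omega
    | cons b t iht =>
      rw [levenshtein_cons_cons]
      simp only [Levenshtein.defaultCost_delete, Levenshtein.defaultCost_insert,
        Levenshtein.defaultCost_substitute]
      rcases Nat.le_total (1 + levenshtein Levenshtein.defaultCost s (b :: t))
          (min (1 + levenshtein Levenshtein.defaultCost (a :: s) t)
            ((if a = b then 0 else 1) + levenshtein Levenshtein.defaultCost s t)) with hc | hc
      · obtain ⟨σ, h1, h2⟩ := ihs (b :: t)
        refine ⟨Op.del :: σ, by simp [applyS, h1], ?_⟩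
        rw [min_eq_left hc]
        simp only [cost_del]
        omega
      · rw [min_eq_right hc]
        rcases Nat.le_total (1 + levenshtein Levenshtein.defaultCost (a :: s) t)
            ((if a = b then 0 else 1) + levenshtein Levenshtein.defaultCost s t) with hc2 | hc2
        · obtain ⟨σ, h1, h2⟩ := iht
          refine ⟨Op.ins b :: σ, by simp [applyS, h1], ?_⟩
          rw [min_eq_left hc2]
          simp only [cost_ins]
          omega
        · rw [min_eq_right hc2]
          obtain ⟨σ, h1, h2⟩ := ihs t
          by_cases hab : a = b
          · refine ⟨Op.copy :: σ, ?_, ?_⟩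
            · simp [applyS, h1, hab]
            · simp only [cost_copy]
              have h3 : (if a = b then (0:ℕ) else 1) = 0 := by simp [hab]
              rw [h3]
              omega
          · refine ⟨Op.flip :: σ, ?_, ?_⟩
            · have : (!a) = b := by revert hab; cases a <;> cases b <;> simp
              simp [applyS, h1, this]
            · simp only [cost_flip]
              have h3 : (if a = b then (0:ℕ) else 1) = 1 := by simp [hab]
              rw [h3]
              omega


lemma aux_range (p : Op → Bool) (hp : p Op.copy = false) :
    ∀ (σ : List Op) (M : ℕ), σ.length ≤ M →
      (∑ j ∈ Finset.range M, if p (σ.getD j Op.copy) then 1 else 0) = σ.countP p := by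
  intro σ
  induction σ with
  | nil => intro M _; simp [hp]
  | cons o σ ih =>
    intro M hM
    cases M with
    | zero => simp at hM
    | succ M' =>
      rw [Finset.sum_range_succ']
      simp only [List.getD_cons_succ, List.getD_cons_zero]
      rw [ih M' (by simpa using hM), List.countP_cons]

lemma card_filter_eq (p : Op → Bool) (hp : p Op.copy = false) (M : ℕ) (σ : List Op)
    (h : σ.length ≤ M) :
    ((univ : Finset (Fin M)).filter (fun j => p (σ.getD j.val Op.copy))).card = σ.countP p := by
  rw [Finset.card_filter, Fin.sum_univ_eq_sum_range (fun j => if p (σ.getD j Op.copy) then 1 else 0) M]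
  exact aux_range p hp σ M h



def enc (M : ℕ) (σ : List Op) :
    Finset (Fin M) × Finset (Fin M) × Finset (Fin M) × Finset (Fin M) :=
  (univ.filter fun j => σ.getD j.val Op.copy = Op.del,
   univ.filter fun j => σ.getD j.val Op.copy = Op.flip,
   univ.filter fun j => σ.getD j.val Op.copy = Op.ins true,
   univ.filter fun j => σ.getD j.val Op.copy = Op.ins false)

lemma op_eq {o o' : Op} (h1 : o = Op.del ↔ o' = Op.del) (h2 : o = Op.flip ↔ o' = Op.flip)
    (h3 : o = Op.ins true ↔ o' = Op.ins true) (h4 : o = Op.ins false ↔ o' = Op.ins false) :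
    o = o' := by
  rcases o with _ | _ | _ | (_ | _) <;> rcases o' with _ | _ | _ | (_ | _) <;> simp_all

lemma enc_inj {M : ℕ} {σ σ' : List Op} (hσ : σ.length ≤ M) (hσ' : σ'.length ≤ M)
    (hlen : σ.length = σ'.length) (h : enc M σ = enc M σ') : σ = σ' := by
  obtain ⟨e1, e2, e3, e4⟩ : (univ.filter fun j : Fin M => σ.getD j.val Op.copy = Op.del) =
        (univ.filter fun j : Fin M => σ'.getD j.val Op.copy = Op.del) ∧
      (univ.filter fun j : Fin M => σ.getD j.val Op.copy = Op.flip) =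
        (univ.filter fun j : Fin M => σ'.getD j.val Op.copy = Op.flip) ∧
      (univ.filter fun j : Fin M => σ.getD j.val Op.copy = Op.ins true) =
        (univ.filter fun j : Fin M => σ'.getD j.val Op.copy = Op.ins true) ∧
      (univ.filter fun j : Fin M => σ.getD j.val Op.copy = Op.ins false) =
        (univ.filter fun j : Fin M => σ'.getD j.val Op.copy = Op.ins false) := by
    simpa [enc, Prod.ext_iff] using h
  apply List.ext_get hlen
  intro j hj1 hj2
  have hjM : j < M := lt_of_lt_of_le hj1 hσ
  rw [List.get_eq_getElem, List.get_eq_getElem,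
    ← List.getD_eq_getElem σ Op.copy hj1, ← List.getD_eq_getElem σ' Op.copy hj2]
  apply op_eq
  · simpa [Finset.mem_filter] using Finset.ext_iff.1 e1 ⟨j, hjM⟩
  · simpa [Finset.mem_filter] using Finset.ext_iff.1 e2 ⟨j, hjM⟩
  · simpa [Finset.mem_filter] using Finset.ext_iff.1 e3 ⟨j, hjM⟩
  · simpa [Finset.mem_filter] using Finset.ext_iff.1 e4 ⟨j, hjM⟩


lemma card_filter_eq' (o : Op) (ho : o ≠ Op.copy) (M : ℕ) (σ : List Op) (h : σ.length ≤ M) :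
    ((univ : Finset (Fin M)).filter (fun j => σ.getD j.val Op.copy = o)).card
      = σ.countP (· == o) := by
  rw [Finset.filter_congr (q := fun j : Fin M => ((· == o) (σ.getD j.val Op.copy) = true))
    (fun x _ => by simp)]
  exact card_filter_eq (· == o) (by simpa using ho.symm) M σ h

def Q (D : ℕ) : Finset (ℕ × ℕ × ℕ × ℕ) :=
  ((Finset.range (D+1)) ×ˢ (Finset.range (D+1)) ×ˢ (Finset.range (D+1)) ×ˢ
    (Finset.range (D+1))).filter
    (fun q => 2 * q.1 + q.2.1 ≤ D ∧ q.2.2.1 + q.2.2.2 = q.1)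

lemma ball_card_le (m D : ℕ) (s : Fin m → Bool) :
    (univ.filter fun t : Fin m → Bool =>
      levenshtein Levenshtein.defaultCost (List.ofFn s) (List.ofFn t) ≤ D).card ≤
    ∑ q ∈ Q D, (m+D).choose q.1 * ((m+D).choose q.2.1 *
      ((m+D).choose q.2.2.1 * (m+D).choose q.2.2.2)) := by
  classical
  set M := m + D with hM
  set E : Finset ((Finset (Fin M)) × (Finset (Fin M)) × (Finset (Fin M)) × (Finset (Fin M))) :=
    univ.filter (fun e => 2 * e.1.card + e.2.1.card ≤ D ∧
      e.2.2.1.card + e.2.2.2.card = e.1.card) with hE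
  -- facts about the chosen script for each t in the ball
  have key : ∀ t : Fin m → Bool,
      levenshtein Levenshtein.defaultCost (List.ofFn s) (List.ofFn t) ≤ D →
      ∃ σ : List Op, applyS σ (List.ofFn s) = some (List.ofFn t) ∧ σ.length ≤ M ∧
        σ.length = m + (σ.countP isInsT + σ.countP isInsF) ∧
        2 * σ.countP isDel + σ.countP isFlip ≤ D ∧
        σ.countP isInsT + σ.countP isInsF = σ.countP isDel := by
    intro t ht
    obtain ⟨σ, h1, h2⟩ := exists_script (List.ofFn s) (List.ofFn t)
    have hcost : cost σ ≤ D := le_trans h2 ht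
    have hlen := applyS_length h1
    have hout := applyS_out_length h1
    rw [List.length_ofFn] at hlen
    rw [List.length_ofFn, List.length_ofFn] at hout
    have hID : σ.countP isIns = σ.countP isDel := by omega
    have hce := cost_eq σ
    have hie := countIns_eq σ
    exact ⟨σ, h1, by omega, by omega, by omega, by omega⟩
  choose! sc hsc1 hsc2 hsc3 hsc4 hsc5 using key
  have step1 : (univ.filter fun t : Fin m → Bool =>
      levenshtein Levenshtein.defaultCost (List.ofFn s) (List.ofFn t) ≤ D).card ≤ E.card := by
    apply Finset.card_le_card_of_injOn (fun t => enc M (sc t))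
    · intro t ht
      rw [Finset.mem_coe, Finset.mem_filter] at ht
      have ht := ht.2
      rw [Finset.mem_coe, hE, Finset.mem_filter]
      refine ⟨Finset.mem_univ _, ?_, ?_⟩
      · show 2 * (enc M (sc t)).1.card + (enc M (sc t)).2.1.card ≤ D
        rw [show (enc M (sc t)).1 = univ.filter (fun j : Fin M => (sc t).getD j.val Op.copy = Op.del) from rfl,
          show (enc M (sc t)).2.1 = univ.filter (fun j : Fin M => (sc t).getD j.val Op.copy = Op.flip) from rfl,
          card_filter_eq' Op.del (by simp) M _ (hsc2 t ht),
          card_filter_eq' Op.flip (by simp) M _ (hsc2 t ht)]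
        exact hsc4 t ht
      · show (enc M (sc t)).2.2.1.card + (enc M (sc t)).2.2.2.card = (enc M (sc t)).1.card
        rw [show (enc M (sc t)).2.2.1 = univ.filter (fun j : Fin M => (sc t).getD j.val Op.copy = Op.ins true) from rfl,
          show (enc M (sc t)).2.2.2 = univ.filter (fun j : Fin M => (sc t).getD j.val Op.copy = Op.ins false) from rfl,
          show (enc M (sc t)).1 = univ.filter (fun j : Fin M => (sc t).getD j.val Op.copy = Op.del) from rfl,
          card_filter_eq' (Op.ins true) (by simp) M _ (hsc2 t ht),
          card_filter_eq' (Op.ins false) (by simp) M _ (hsc2 t ht),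
          card_filter_eq' Op.del (by simp) M _ (hsc2 t ht)]
        exact hsc5 t ht
    · intro t ht t' ht' hee
      simp only [Finset.coe_filter, Set.mem_setOf_eq, Finset.mem_univ, true_and] at ht ht'
      replace hee : enc M (sc t) = enc M (sc t') := hee
      have hW1 : (enc M (sc t)).2.2.1.card = (enc M (sc t')).2.2.1.card := by rw [hee]
      have hW0 : (enc M (sc t)).2.2.2.card = (enc M (sc t')).2.2.2.card := by rw [hee]
      have cT : (enc M (sc t)).2.2.1.card = (sc t).countP isInsT :=
        card_filter_eq' (Op.ins true) (by simp) M _ (hsc2 t ht)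
      have cF : (enc M (sc t)).2.2.2.card = (sc t).countP isInsF :=
        card_filter_eq' (Op.ins false) (by simp) M _ (hsc2 t ht)
      have cT' : (enc M (sc t')).2.2.1.card = (sc t').countP isInsT :=
        card_filter_eq' (Op.ins true) (by simp) M _ (hsc2 t' ht')
      have cF' : (enc M (sc t')).2.2.2.card = (sc t').countP isInsF :=
        card_filter_eq' (Op.ins false) (by simp) M _ (hsc2 t' ht')
      have hll : (sc t).length = (sc t').length := by
        rw [hsc3 t ht, hsc3 t' ht']
        omega
      have := enc_inj (hsc2 t ht) (hsc2 t' ht') hll hee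
      have h1 := hsc1 t ht
      have h1' := hsc1 t' ht'
      rw [this, h1'] at h1
      have := List.ofFn_injective (Option.some_injective _ h1)
      exact this.symm
  refine le_trans step1 ?_
  -- step 2 : count E
  have step2 : E ⊆ (Q D).biUnion (fun q =>
      (Finset.powersetCard q.1 (univ : Finset (Fin M))) ×ˢ
      ((Finset.powersetCard q.2.1 univ) ×ˢ
      ((Finset.powersetCard q.2.2.1 univ) ×ˢ (Finset.powersetCard q.2.2.2 univ)))) := by
    intro e he
    rw [hE, Finset.mem_filter] at he
    obtain ⟨-, hc1, hc2⟩ := he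
    rw [Finset.mem_biUnion]
    refine ⟨(e.1.card, e.2.1.card, e.2.2.1.card, e.2.2.2.card), ?_, ?_⟩
    · simp only [Q, Finset.mem_filter, Finset.mem_product, Finset.mem_range]
      omega
    · simp [Finset.mem_product, Finset.mem_powersetCard_univ]
  refine le_trans (le_trans (Finset.card_le_card step2) (Finset.card_biUnion_le)) ?_
  apply Finset.sum_le_sum
  intro q hq
  simp only [Finset.card_product, Finset.card_powersetCard, Finset.card_univ, Fintype.card_fin]
  exact le_refl _



lemma binom_sum_le (n k : ℕ) (x : ℝ) (hx : 0 ≤ x) :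
    ∑ i ∈ Finset.range k, (n.choose i : ℝ) * x ^ i ≤ (1 + x) ^ n := by
  have h2 : ∀ K, n + 1 ≤ K → ∑ i ∈ Finset.range K, (n.choose i : ℝ) * x ^ i = (1 + x) ^ n := by
    intro K hK
    have hb : (1 + x) ^ n = ∑ i ∈ Finset.range (n+1), (n.choose i : ℝ) * x ^ i := by
      rw [add_comm 1 x, add_pow]
      exact Finset.sum_congr rfl fun i _ => by ring
    rw [hb]
    refine (Finset.sum_subset (Finset.range_subset_range.2 hK) ?_).symm
    · intro i hi hni
      rw [Finset.mem_range] at hi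
      rw [Finset.mem_range, not_lt] at hni
      rw [Nat.choose_eq_zero_of_lt (by omega)]
      simp
  calc ∑ i ∈ Finset.range k, (n.choose i : ℝ) * x ^ i
      ≤ ∑ i ∈ Finset.range (k + (n+1)), (n.choose i : ℝ) * x ^ i := by
        apply Finset.sum_le_sum_of_subset_of_nonneg
        · exact Finset.range_subset_range.2 (by omega)
        · intro i _ _
          positivity
    _ = (1 + x) ^ n := h2 _ (by omega)



lemma sum_prod_eq {α β : Type*} (s : Finset α) (t : Finset β) (f : α → ℝ) (g : β → ℝ) :
    ∑ q ∈ s ×ˢ t, f q.1 * g q.2 = (∑ a ∈ s, f a) * (∑ b ∈ t, g b) := by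
  rw [Finset.sum_product]
  exact (Finset.sum_mul_sum s t f g).symm

lemma sumQ_le (m D : ℕ) (hD : 0 < D) :
    ((∑ q ∈ Q D, (m+D).choose q.1 * ((m+D).choose q.2.1 *
      ((m+D).choose q.2.2.1 * (m+D).choose q.2.2.2)) : ℕ) : ℝ) ≤
    (4 * Real.exp 1 * m / D + 5 * Real.exp 1 + 4 * Real.exp 1 / D) ^ D := by
  set M : ℕ := m + D with hMdef
  have hM0 : (0:ℝ) < M := by
    have : 0 < M := by omega
    exact_mod_cast this
  set x : ℝ := D / (4 * M) with hxdef
  have hx0 : 0 < x := by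
    apply div_pos
    · exact_mod_cast hD
    · linarith
  have hx1 : x ≤ 1 := by
    rw [hxdef, div_le_one (by linarith)]
    have : (D:ℝ) ≤ M := by
      have : D ≤ M := by omega
      exact_mod_cast this
    linarith
  set S : ℝ := ∑ i ∈ Finset.range (D+1), (M.choose i : ℝ) * x ^ i with hSdef
  have hSnn : ∀ i, 0 ≤ (M.choose i : ℝ) * x ^ i := fun i => by positivity
  have hS : S ≤ Real.exp ((D:ℝ)/4) := by
    calc S ≤ (1 + x) ^ M := binom_sum_le M (D+1) x hx0.le
      _ ≤ Real.exp x ^ M := by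
          apply pow_le_pow_left₀ (by linarith)
          linarith [Real.add_one_le_exp x]
      _ = Real.exp (x * M) := by
          rw [← Real.exp_nat_mul]
          ring_nf
      _ = Real.exp ((D:ℝ)/4) := by
          congr 1
          rw [hxdef]
          field_simp
  have key : ((∑ q ∈ Q D, M.choose q.1 * (M.choose q.2.1 *
      (M.choose q.2.2.1 * M.choose q.2.2.2)) : ℕ) : ℝ) * x ^ D ≤ S * (S * (S * S)) := by
    push_cast
    rw [Finset.sum_mul]
    calc ∑ q ∈ Q D, (M.choose q.1 : ℝ) * ((M.choose q.2.1 : ℝ) *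
          ((M.choose q.2.2.1 : ℝ) * (M.choose q.2.2.2 : ℝ))) * x ^ D
        ≤ ∑ q ∈ Q D, (M.choose q.1 : ℝ) * x ^ q.1 * ((M.choose q.2.1 : ℝ) * x ^ q.2.1 *
            ((M.choose q.2.2.1 : ℝ) * x ^ q.2.2.1 * ((M.choose q.2.2.2 : ℝ) * x ^ q.2.2.2))) := by
          apply Finset.sum_le_sum
          intro q hq
          simp only [Q, Finset.mem_filter, Finset.mem_product, Finset.mem_range] at hq
          obtain ⟨⟨h1, h2, h3, h4⟩, h5, h6⟩ := hq
          have hxe : x ^ D ≤ x ^ (q.1 + q.2.1 + (q.2.2.1 + q.2.2.2)) :=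
            pow_le_pow_of_le_one hx0.le hx1 (by omega)
          calc (M.choose q.1 : ℝ) * ((M.choose q.2.1 : ℝ) *
                ((M.choose q.2.2.1 : ℝ) * (M.choose q.2.2.2 : ℝ))) * x ^ D
              ≤ (M.choose q.1 : ℝ) * ((M.choose q.2.1 : ℝ) *
                ((M.choose q.2.2.1 : ℝ) * (M.choose q.2.2.2 : ℝ))) *
                  x ^ (q.1 + q.2.1 + (q.2.2.1 + q.2.2.2)) := by
                apply mul_le_mul_of_nonneg_left hxe
                positivity
            _ = _ := by
                rw [pow_add, pow_add, pow_add]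
                ring
      _ ≤ ∑ q ∈ (Finset.range (D+1)) ×ˢ (Finset.range (D+1)) ×ˢ (Finset.range (D+1)) ×ˢ
            (Finset.range (D+1)), (M.choose q.1 : ℝ) * x ^ q.1 *
            ((M.choose q.2.1 : ℝ) * x ^ q.2.1 *
            ((M.choose q.2.2.1 : ℝ) * x ^ q.2.2.1 * ((M.choose q.2.2.2 : ℝ) * x ^ q.2.2.2))) := by
          apply Finset.sum_le_sum_of_subset_of_nonneg (Finset.filter_subset _ _)
          intro q _ _
          positivity
      _ = S * (S * (S * S)) := by
          calc ∑ q ∈ (Finset.range (D+1)) ×ˢ (Finset.range (D+1)) ×ˢ (Finset.range (D+1)) ×ˢ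
                (Finset.range (D+1)), (M.choose q.1 : ℝ) * x ^ q.1 *
                ((M.choose q.2.1 : ℝ) * x ^ q.2.1 *
                ((M.choose q.2.2.1 : ℝ) * x ^ q.2.2.1 * ((M.choose q.2.2.2 : ℝ) * x ^ q.2.2.2)))
              = S * (∑ p ∈ (Finset.range (D+1)) ×ˢ (Finset.range (D+1)) ×ˢ (Finset.range (D+1)),
                  (M.choose p.1 : ℝ) * x ^ p.1 * ((M.choose p.2.1 : ℝ) * x ^ p.2.1 *
                  ((M.choose p.2.2 : ℝ) * x ^ p.2.2))) :=
                sum_prod_eq _ _ (fun i : ℕ => (M.choose i : ℝ) * x ^ i)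
                  (fun p : ℕ × ℕ × ℕ => (M.choose p.1 : ℝ) * x ^ p.1 *
                    ((M.choose p.2.1 : ℝ) * x ^ p.2.1 * ((M.choose p.2.2 : ℝ) * x ^ p.2.2)))
            _ = S * (S * (∑ p ∈ (Finset.range (D+1)) ×ˢ (Finset.range (D+1)),
                  (M.choose p.1 : ℝ) * x ^ p.1 * ((M.choose p.2 : ℝ) * x ^ p.2))) := by
                congr 1
                exact sum_prod_eq _ _ (fun i : ℕ => (M.choose i : ℝ) * x ^ i)
                  (fun p : ℕ × ℕ => (M.choose p.1 : ℝ) * x ^ p.1 * ((M.choose p.2 : ℝ) * x ^ p.2))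
            _ = S * (S * (S * S)) := by
                congr 2
                exact sum_prod_eq _ _ (fun i : ℕ => (M.choose i : ℝ) * x ^ i)
                  (fun i : ℕ => (M.choose i : ℝ) * x ^ i)
  have hDpos : (0:ℝ) < D := by exact_mod_cast hD
  have hxDpos : 0 < x ^ D := pow_pos hx0 D
  have hS0 : 0 ≤ S := Finset.sum_nonneg (fun i _ => hSnn i)
  have hT : ((∑ q ∈ Q D, M.choose q.1 * (M.choose q.2.1 *
      (M.choose q.2.2.1 * M.choose q.2.2.2)) : ℕ) : ℝ) ≤
      (Real.exp 1 * (4 * (M:ℝ) / D)) ^ D := by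
    have h1 : ((∑ q ∈ Q D, M.choose q.1 * (M.choose q.2.1 *
        (M.choose q.2.2.1 * M.choose q.2.2.2)) : ℕ) : ℝ) ≤ S * (S * (S * S)) / x ^ D :=
      (le_div_iff₀ hxDpos).2 key
    have h2 : S * (S * (S * S)) ≤ Real.exp ((D:ℝ)/4) ^ 4 := by
      calc S * (S * (S * S)) = S ^ 4 := by ring
        _ ≤ Real.exp ((D:ℝ)/4) ^ 4 := pow_le_pow_left₀ hS0 hS 4
    have h3 : Real.exp ((D:ℝ)/4) ^ 4 = Real.exp 1 ^ D := by
      rw [← Real.exp_nat_mul, ← Real.exp_nat_mul]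
      congr 1
      push_cast
      ring
    have h4 : Real.exp 1 ^ D / x ^ D = (Real.exp 1 * (4 * (M:ℝ) / D)) ^ D := by
      rw [← div_pow]
      congr 1
      rw [hxdef]
      field_simp
    calc ((∑ q ∈ Q D, M.choose q.1 * (M.choose q.2.1 *
          (M.choose q.2.2.1 * M.choose q.2.2.2)) : ℕ) : ℝ)
        ≤ S * (S * (S * S)) / x ^ D := h1
      _ ≤ Real.exp ((D:ℝ)/4) ^ 4 / x ^ D := by gcongr
      _ = (Real.exp 1 * (4 * (M:ℝ) / D)) ^ D := by rw [h3, h4]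
  refine le_trans hT ?_
  apply pow_le_pow_left₀ (by positivity)
  have hbase : Real.exp 1 * (4 * (M:ℝ) / D) = 4 * Real.exp 1 * m / D + 4 * Real.exp 1 := by
    rw [hMdef]
    push_cast
    field_simp
  rw [hbase]
  have h5 : 0 ≤ 4 * Real.exp 1 / D := by positivity
  have h6 : 0 < Real.exp 1 := Real.exp_pos 1
  linarith


lemma total_card_le (m D : ℕ) :
    (Finset.univ.filter fun p : (Fin m → Bool) × (Fin m → Bool) =>
        levenshtein Levenshtein.defaultCost (List.ofFn p.1) (List.ofFn p.2) ≤ D).card ≤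
      2 ^ m * ∑ q ∈ Q D, (m+D).choose q.1 * ((m+D).choose q.2.1 *
        ((m+D).choose q.2.2.1 * (m+D).choose q.2.2.2)) := by
  classical
  set P : (Fin m → Bool) × (Fin m → Bool) → Prop := fun p =>
    levenshtein Levenshtein.defaultCost (List.ofFn p.1) (List.ofFn p.2) ≤ D with hP
  have h0 : (Finset.univ.filter P).card =
      ∑ s ∈ (Finset.univ : Finset (Fin m → Bool)),
        ((Finset.univ.filter P).filter (fun p => p.1 = s)).card :=
    Finset.card_eq_sum_card_fiberwise (fun p _ => Finset.mem_univ p.1)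
  rw [h0]
  have h1 : ∀ s : Fin m → Bool, ((Finset.univ.filter P).filter (fun p => p.1 = s)).card ≤
      ∑ q ∈ Q D, (m+D).choose q.1 * ((m+D).choose q.2.1 *
        ((m+D).choose q.2.2.1 * (m+D).choose q.2.2.2)) := by
    intro s
    refine le_trans ?_ (ball_card_le m D s)
    apply Finset.card_le_card_of_injOn (fun p => p.2)
    · intro p hp
      simp only [Finset.mem_coe, Finset.mem_filter, Finset.mem_univ, true_and, hP] at hp ⊢
      rw [← hp.2]
      exact hp.1
    · intro p hp p' hp' hpp
      simp only [Finset.coe_filter, Set.mem_setOf_eq, Finset.mem_filter] at hp hp'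
      exact Prod.ext (hp.2.trans hp'.2.symm) hpp
  calc ∑ s ∈ (Finset.univ : Finset (Fin m → Bool)),
        ((Finset.univ.filter P).filter (fun p => p.1 = s)).card
      ≤ ∑ s ∈ (Finset.univ : Finset (Fin m → Bool)), ∑ q ∈ Q D,
          (m+D).choose q.1 * ((m+D).choose q.2.1 *
          ((m+D).choose q.2.2.1 * (m+D).choose q.2.2.2)) :=
        Finset.sum_le_sum (fun s _ => h1 s)
    _ = 2 ^ m * ∑ q ∈ Q D, (m+D).choose q.1 * ((m+D).choose q.2.1 *
          ((m+D).choose q.2.2.1 * (m+D).choose q.2.2.2)) := by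
        rw [Finset.sum_const, Finset.card_univ]
        simp [Fintype.card_fun]

lemma final_bound (m D : ℕ) (hD : 0 < D) :
    ((Finset.univ.filter fun p : (Fin m → Bool) × (Fin m → Bool) =>
          levenshtein Levenshtein.defaultCost (List.ofFn p.1) (List.ofFn p.2) ≤ D).card : ℝ) /
        4 ^ m ≤
      (4 * Real.exp 1 * m / D + 5 * Real.exp 1 + 4 * Real.exp 1 / D) ^ D / 2 ^ m := by
  have hcard := total_card_le m D
  have hsum := sumQ_le m D hD
  have h1 : ((Finset.univ.filter fun p : (Fin m → Bool) × (Fin m → Bool) =>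
      levenshtein Levenshtein.defaultCost (List.ofFn p.1) (List.ofFn p.2) ≤ D).card : ℝ) ≤
      (2:ℝ) ^ m * ((∑ q ∈ Q D, (m+D).choose q.1 * ((m+D).choose q.2.1 *
        ((m+D).choose q.2.2.1 * (m+D).choose q.2.2.2)) : ℕ) : ℝ) := by
    exact_mod_cast hcard
  calc ((Finset.univ.filter fun p : (Fin m → Bool) × (Fin m → Bool) =>
          levenshtein Levenshtein.defaultCost (List.ofFn p.1) (List.ofFn p.2) ≤ D).card : ℝ) /
        4 ^ m
      ≤ ((2:ℝ) ^ m * ((∑ q ∈ Q D, (m+D).choose q.1 * ((m+D).choose q.2.1 *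
          ((m+D).choose q.2.2.1 * (m+D).choose q.2.2.2)) : ℕ) : ℝ)) / 4 ^ m := by
        gcongr
    _ = ((∑ q ∈ Q D, (m+D).choose q.1 * ((m+D).choose q.2.1 *
          ((m+D).choose q.2.2.1 * (m+D).choose q.2.2.2)) : ℕ) : ℝ) / 2 ^ m := by
        rw [show (4:ℝ) ^ m = 2 ^ m * 2 ^ m from by rw [← mul_pow]; norm_num]
        rw [mul_div_mul_left _ _ (by positivity : ((2:ℝ) ^ m) ≠ 0)]
    _ ≤ (4 * Real.exp 1 * m / D + 5 * Real.exp 1 + 4 * Real.exp 1 / D) ^ D / 2 ^ m := by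
        gcongr

end RSL

/-- If `s₁` and `s₂` are independent uniformly random bitstrings of length `m`,
then `Pr[ED(s₁, s₂) ≤ D] ≤ (4e·m/D + 5e + 4e/D)^D / 2^m`. The probability is
the fraction of the `4^m` pairs of bitstrings within edit distance `D`. -/
theorem random_strings_levenshtein_lower_tail (m D : ℕ) (hD : 0 < D) :
    ((Finset.univ.filter fun p : (Fin m → Bool) × (Fin m → Bool) =>
          levenshtein Levenshtein.defaultCost (List.ofFn p.1) (List.ofFn p.2) ≤ D).card : ℝ) /
        4 ^ m ≤
      (4 * Real.exp 1 * m / D + 5 * Real.exp 1 + 4 * Real.exp 1 / D) ^ D / 2 ^ m :=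
  RSL.final_bound m D hD
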